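/- arXiv:0812.2389 — 3 statements merged into one kernel-verified Lean document; each statement's English description precedes it below -/
import Mathlib

section
/- Fix θ ∈ (0,1) and M > 0. Define Φ(s) = (1/θ)(e^{θs} − 1) for s ≤ M and Φ(s) = (s − M)e^{θM} + (1/θ)(e^{θM} − 1) for s ≥ M, and β(s) = log(1+s). Then for all s ≥ 0: (i) Φ'(s) ≥ 1; (ii) 0 ≤ −(Φ ∘ β)''(s) ≤ (1 − θ + e^{(θ−1)M})/(1+s); and (iii) Φ(β(s)) → s monotonically as M → ∞ and θ → 1. -/
/-- The function `Φ = Φ_{M,θ}` of Lemma 3.2 of the paper. -/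
noncomputable def PhiFn (θ M s : ℝ) : ℝ :=
  if s ≤ M then (1 / θ) * (Real.exp (θ * s) - 1)
  else (s - M) * Real.exp (θ * M) + (1 / θ) * (Real.exp (θ * M) - 1)


open Real Filter Set

/-- core convexity fact: `(c-u+1)e^u ≤ (c-v+1)e^v` for `u ≤ v ≤ c`. -/
lemma core_ineq {u v c : ℝ} (huv : u ≤ v) (hvc : v ≤ c) :
    (c - u + 1) * Real.exp u ≤ (c - v + 1) * Real.exp v := by
  have h1 : (v - u) + 1 ≤ Real.exp (v - u) := Real.add_one_le_exp _
  have h2 : Real.exp v = Real.exp u * Real.exp (v - u) := by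
    rw [← Real.exp_add]; ring_nf
  have hE : (0:ℝ) < Real.exp u := Real.exp_pos _
  have hc : (0:ℝ) ≤ (c - v + 1) * Real.exp u := mul_nonneg (by linarith) hE.le
  have h3 : (c - v + 1) * Real.exp u * ((v-u)+1) ≤ (c - v + 1) * Real.exp u * Real.exp (v-u) :=
    mul_le_mul_of_nonneg_left h1 hc
  have h4 : (c - u + 1) * Real.exp u ≤ (c - v + 1) * Real.exp u * ((v-u)+1) := by
    nlinarith [mul_nonneg (mul_nonneg (sub_nonneg.2 huv) (sub_nonneg.2 hvc)) hE.le]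
  calc (c - u + 1) * Real.exp u ≤ (c - v + 1) * Real.exp u * Real.exp (v-u) := le_trans h4 h3
    _ = (c - v + 1) * Real.exp v := by rw [h2]; ring

lemma helperA {θ θ' b : ℝ} (hθ : 0 < θ) (hθ' : θ ≤ θ') (hb : 0 ≤ b) :
    (1/θ) * (Real.exp (θ*b) - 1) ≤ (1/θ') * (Real.exp (θ'*b) - 1) := by
  have hθ'0 : 0 < θ' := lt_of_lt_of_le hθ hθ'
  have ht0 : 0 < θ/θ' := div_pos hθ hθ'0
  have key := convexOn_exp.2 (Set.mem_univ (0:ℝ)) (Set.mem_univ (θ'*b))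
    (show (0:ℝ) ≤ 1 - θ/θ' by
      have : θ/θ' ≤ 1 := div_le_one_of_le₀ hθ' hθ'0.le
      linarith) ht0.le (by ring)
  simp only [smul_eq_mul, mul_zero, zero_add, Real.exp_zero, mul_one] at key
  have hrw : (θ/θ') * (θ'*b) = θ*b := by field_simp
  rw [hrw] at key
  have key2 : Real.exp (θ*b) - 1 ≤ (θ/θ') * (Real.exp (θ'*b) - 1) := by
    ring_nf; ring_nf at key; linarith
  calc (1/θ) * (Real.exp (θ*b) - 1) ≤ (1/θ) * ((θ/θ') * (Real.exp (θ'*b) - 1)) :=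
        mul_le_mul_of_nonneg_left key2 (by positivity)
    _ = (1/θ') * (Real.exp (θ'*b) - 1) := by field_simp

/-- Rewrite the linear piece in `core_ineq` form. -/
lemma L_eq {θ M b : ℝ} (hθ : θ ≠ 0) :
    (b - M) * Real.exp (θ*M) + (1/θ) * (Real.exp (θ*M) - 1)
      = (1/θ) * ((θ*b - θ*M + 1) * Real.exp (θ*M)) - 1/θ := by
  field_simp; ring

lemma E_eq {θ b : ℝ} (hθ : θ ≠ 0) :
    (1/θ) * (Real.exp (θ*b) - 1) = (1/θ) * ((θ*b - θ*b + 1) * Real.exp (θ*b)) - 1/θ := by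
  field_simp
  ring

/-- `PhiFn` is below the exponential piece everywhere. -/
lemma phi_le_E {θ M b : ℝ} (hθ : 0 < θ) :
    PhiFn θ M b ≤ (1/θ) * (Real.exp (θ*b) - 1) := by
  unfold PhiFn
  split_ifs with h
  · exact le_refl _
  · push_neg at h
    rw [L_eq hθ.ne', E_eq hθ.ne']
    have := core_ineq (u := θ*M) (v := θ*b) (c := θ*b)
      (by nlinarith) (le_refl _)
    have h2 := mul_le_mul_of_nonneg_left this (by positivity : (0:ℝ) ≤ 1/θ)
    linarith

/-- Monotone in `M`. -/
lemma phi_mono_M {θ M M' b : ℝ} (hθ : 0 < θ) (hMM' : M ≤ M') :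
    PhiFn θ M b ≤ PhiFn θ M' b := by
  unfold PhiFn
  split_ifs with h1 h2 h2
  · exact le_refl _
  · exact absurd (le_trans h1 hMM') h2
  · -- M < b ≤ M' : linear piece ≤ exponential piece
    push_neg at h1
    rw [L_eq hθ.ne', E_eq hθ.ne']
    have := core_ineq (u := θ*M) (v := θ*b) (c := θ*b) (by nlinarith) (le_refl _)
    have h2 := mul_le_mul_of_nonneg_left this (by positivity : (0:ℝ) ≤ 1/θ)
    linarith
  · push_neg at h1 h2
    rw [L_eq hθ.ne' (M := M), L_eq hθ.ne' (M := M')]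
    have := core_ineq (u := θ*M) (v := θ*M') (c := θ*b)
      (by nlinarith) (by nlinarith)
    have h3 := mul_le_mul_of_nonneg_left this (by positivity : (0:ℝ) ≤ 1/θ)
    linarith

/-- Monotone in `θ` (for `b ≥ 0`, `M > 0`). -/
lemma phi_mono_theta {θ θ' M b : ℝ} (hθ : 0 < θ) (hθ' : θ ≤ θ') (hM : 0 < M) (hb : 0 ≤ b) :
    PhiFn θ M b ≤ PhiFn θ' M b := by
  unfold PhiFn
  split_ifs with h
  · exact helperA hθ hθ' hb
  · push_neg at h
    have h1 : (b - M) * Real.exp (θ*M) ≤ (b - M) * Real.exp (θ'*M) := by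
      apply mul_le_mul_of_nonneg_left _ (by linarith)
      exact Real.exp_le_exp.2 (by nlinarith)
    have h2 := helperA (b := M) hθ hθ' hM.le
    linarith

lemma phi_le_id {θ M s : ℝ} (hθ : 0 < θ) (hθ1 : θ ≤ 1) (hs : 0 ≤ s) :
    PhiFn θ M (Real.log (1+s)) ≤ s := by
  have h1s : (0:ℝ) < 1 + s := by linarith
  have hb : 0 ≤ Real.log (1+s) := Real.log_nonneg (by linarith)
  calc PhiFn θ M (Real.log (1+s)) ≤ (1/θ) * (Real.exp (θ*Real.log (1+s)) - 1) := phi_le_E hθ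
    _ ≤ (1/1) * (Real.exp (1*Real.log (1+s)) - 1) := helperA hθ hθ1 hb
    _ = s := by rw [one_mul, Real.exp_log h1s]; ring

lemma hasDerivAt_E {θ : ℝ} (hθ : θ ≠ 0) (t : ℝ) :
    HasDerivAt (fun t => (1/θ) * (Real.exp (θ*t) - 1)) (Real.exp (θ*t)) t := by
  have h1 : HasDerivAt (fun t : ℝ => θ * t) θ t := by
    simpa using (hasDerivAt_id t).const_mul θ
  have h2 : HasDerivAt (fun t : ℝ => Real.exp (θ*t)) (Real.exp (θ*t) * θ) t := h1.exp
  have h3 := (h2.sub_const 1).const_mul (1/θ)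
  refine h3.congr_deriv ?_
  field_simp

lemma hasDerivAt_L (θ M c t : ℝ) :
    HasDerivAt (fun t => (t - M) * Real.exp (θ*M) + c) (Real.exp (θ*M)) t := by
  have h1 : HasDerivAt (fun t : ℝ => (t - M) * Real.exp (θ*M)) (1 * Real.exp (θ*M)) t :=
    ((hasDerivAt_id t).sub_const M).mul_const _
  simpa using h1.add_const c

lemma phi_hasDerivAt_kink {θ M : ℝ} (hθ0 : 0 < θ) :
    HasDerivAt (PhiFn θ M) (Real.exp (θ*M)) M := by
  have hleft : HasDerivWithinAt (PhiFn θ M) (Real.exp (θ*M)) (Set.Iic M) M := by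
    have := ((hasDerivAt_E hθ0.ne' M).hasDerivWithinAt (s := Set.Iic M)).congr
      (f₁ := PhiFn θ M) (fun y hy => if_pos hy) (if_pos le_rfl)
    simpa using this
  have hright : HasDerivWithinAt (PhiFn θ M) (Real.exp (θ*M)) (Set.Ici M) M := by
    refine ((hasDerivAt_L θ M ((1/θ) * (Real.exp (θ*M) - 1)) M).hasDerivWithinAt
      (s := Set.Ici M)).congr (f₁ := PhiFn θ M) (fun y hy => ?_) ?_
    · rcases eq_or_lt_of_le (Set.mem_Ici.1 hy) with rfl | hy'
      · simp [PhiFn]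
      · simp [PhiFn, not_le.2 hy']
    · simp [PhiFn]
  rw [← hasDerivWithinAt_univ, ← Set.Iic_union_Ici (a := M)]
  exact hleft.union hright

lemma part1 {θ M : ℝ} (hθ0 : 0 < θ) (hθ1 : θ < 1) (hM : 0 < M) {s : ℝ} (hs : 0 ≤ s) :
    1 ≤ deriv (PhiFn θ M) s := by
  rcases lt_trichotomy s M with h | h | h
  · have hev : PhiFn θ M =ᶠ[nhds s] (fun t => (1/θ) * (Real.exp (θ*t) - 1)) :=
      Filter.eventuallyEq_of_mem (Iio_mem_nhds h) (fun t ht => if_pos (le_of_lt ht))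
    rw [hev.deriv_eq, (hasDerivAt_E hθ0.ne' s).deriv]
    exact Real.one_le_exp (by positivity)
  · rw [h, (phi_hasDerivAt_kink hθ0).deriv]
    exact Real.one_le_exp (by positivity)
  · have hev : PhiFn θ M =ᶠ[nhds s]
        (fun t => (t - M) * Real.exp (θ*M) + (1/θ) * (Real.exp (θ*M) - 1)) :=
      Filter.eventuallyEq_of_mem (Ioi_mem_nhds h) (fun t ht => if_neg (not_le.2 ht))
    rw [hev.deriv_eq, (hasDerivAt_L θ M _ s).deriv]
    exact Real.one_le_exp (by positivity)

lemma hasDerivAt_log1p {t : ℝ} (ht : -1 < t) :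
    HasDerivAt (fun t => Real.log (1+t)) (1/(1+t)) t := by
  have h : HasDerivAt (fun t : ℝ => 1+t) 1 t := by simpa using (hasDerivAt_id t).const_add 1
  simpa using h.log (by linarith)

lemma hasDerivAt_Ecomp {θ t : ℝ} (hθ : θ ≠ 0) (ht : -1 < t) :
    HasDerivAt (fun t => (1/θ) * (Real.exp (θ * Real.log (1+t)) - 1))
      (Real.exp (θ * Real.log (1+t)) / (1+t)) t := by
  have inner : HasDerivAt (fun t : ℝ => θ * Real.log (1+t)) (θ * (1/(1+t))) t :=
    (hasDerivAt_log1p ht).const_mul θ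
  have h := ((inner.exp).sub_const 1).const_mul (1/θ)
  refine h.congr_deriv ?_
  have h1t : (1+t) ≠ 0 := by linarith
  field_simp

lemma hasDerivAt_D1 {θ t : ℝ} (ht : -1 < t) :
    HasDerivAt (fun t => Real.exp (θ * Real.log (1+t)) / (1+t))
      ((θ-1) * Real.exp (θ * Real.log (1+t)) / (1+t)^2) t := by
  have h1t : (1+t) ≠ 0 := by linarith
  have inner : HasDerivAt (fun t : ℝ => θ * Real.log (1+t)) (θ * (1/(1+t))) t :=
    (hasDerivAt_log1p ht).const_mul θ
  have den : HasDerivAt (fun t : ℝ => 1+t) 1 t := by simpa using (hasDerivAt_id t).const_add 1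
  have h := (inner.exp).div den h1t
  refine h.congr_deriv ?_
  field_simp

lemma hasDerivAt_Lcomp {t : ℝ} (θ M c : ℝ) (ht : -1 < t) :
    HasDerivAt (fun t => (Real.log (1+t) - M) * Real.exp (θ*M) + c)
      (Real.exp (θ*M) / (1+t)) t := by
  have h := (((hasDerivAt_log1p ht).sub_const M).mul_const (Real.exp (θ*M))).add_const c
  refine h.congr_deriv ?_
  ring

lemma hasDerivAt_D2 {t : ℝ} (K : ℝ) (ht : -1 < t) :
    HasDerivAt (fun t => K / (1+t)) (-(K / (1+t)^2)) t := by
  have h1t : (1+t) ≠ 0 := by linarith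
  have den : HasDerivAt (fun t : ℝ => 1+t) 1 t := by simpa using (hasDerivAt_id t).const_add 1
  have h := (hasDerivAt_const t K).div den h1t
  refine h.congr_deriv ?_
  field_simp
  ring

lemma part2 {θ M : ℝ} (hθ0 : 0 < θ) (hθ1 : θ < 1) (hM : 0 < M) {s : ℝ} (hs : 0 ≤ s)
    (hne : Real.log (1+s) ≠ M) :
    0 ≤ -(deriv (deriv (fun t => PhiFn θ M (Real.log (1 + t)))) s) ∧
    -(deriv (deriv (fun t => PhiFn θ M (Real.log (1 + t)))) s)
      ≤ (1 - θ + Real.exp ((θ - 1) * M)) / (1 + s) := by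
  have h1s : (0:ℝ) < 1 + s := by linarith
  have hm1 : (-1:ℝ) < s := by linarith
  rcases lt_or_gt_of_ne hne with h | h
  · -- below the kink
    have hsub : s < Real.exp M - 1 := by
      have := (Real.log_lt_iff_lt_exp h1s).1 h; linarith
    have hFg : (fun t => PhiFn θ M (Real.log (1 + t))) =ᶠ[nhds s]
        (fun t => (1/θ) * (Real.exp (θ * Real.log (1+t)) - 1)) := by
      refine Filter.eventuallyEq_of_mem (Ioo_mem_nhds hm1 hsub) (fun t ht => ?_)
      have h1t : (0:ℝ) < 1 + t := by have := ht.1; linarith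
      have : Real.log (1+t) < M := (Real.log_lt_iff_lt_exp h1t).2 (by have := ht.2; linarith)
      exact if_pos this.le
    have hg1 : deriv (fun t => (1/θ) * (Real.exp (θ * Real.log (1+t)) - 1)) =ᶠ[nhds s]
        (fun t => Real.exp (θ * Real.log (1+t)) / (1+t)) :=
      Filter.eventuallyEq_of_mem (Ioi_mem_nhds hm1)
        (fun t ht => (hasDerivAt_Ecomp hθ0.ne' ht).deriv)
    have key : deriv (deriv (fun t => PhiFn θ M (Real.log (1 + t)))) s
        = (θ-1) * Real.exp (θ * Real.log (1+s)) / (1+s)^2 := by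
      rw [(hFg.deriv.trans hg1).deriv_eq, (hasDerivAt_D1 hm1).deriv]
    have hkey2 : -((θ-1) * Real.exp (θ * Real.log (1+s)) / (1+s)^2)
        = (1-θ) * Real.exp (θ * Real.log (1+s)) / (1+s)^2 := by ring
    have hX : Real.exp (θ * Real.log (1+s)) ≤ 1 + s := by
      have hl : 0 ≤ Real.log (1+s) := Real.log_nonneg (by linarith)
      calc Real.exp (θ * Real.log (1+s)) ≤ Real.exp (1 * Real.log (1+s)) :=
            Real.exp_le_exp.2 (by nlinarith)
        _ = 1 + s := by rw [one_mul, Real.exp_log h1s]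
    constructor
    · rw [key, hkey2]
      apply div_nonneg (mul_nonneg (by linarith) (Real.exp_pos _).le) (by positivity)
    · rw [key, hkey2, div_le_div_iff₀ (by positivity) h1s]
      nlinarith [mul_le_mul_of_nonneg_left hX (mul_nonneg (by linarith : (0:ℝ) ≤ 1-θ) h1s.le),
        mul_pos (Real.exp_pos ((θ-1)*M)) (mul_pos h1s h1s), Real.exp_pos ((θ-1)*M)]
  · -- above the kink
    have hsub : Real.exp M < 1 + s := (Real.lt_log_iff_exp_lt h1s).1 h
    have hEpos : (0:ℝ) < Real.exp M := Real.exp_pos _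
    have hFg : (fun t => PhiFn θ M (Real.log (1 + t))) =ᶠ[nhds s]
        (fun t => (Real.log (1+t) - M) * Real.exp (θ*M) + (1/θ) * (Real.exp (θ*M) - 1)) := by
      refine Filter.eventuallyEq_of_mem (Ioi_mem_nhds (show Real.exp M - 1 < s by linarith))
        (fun t ht => ?_)
      have h1t : Real.exp M < 1 + t := by have : Real.exp M - 1 < t := ht; linarith
      have : M < Real.log (1+t) := (Real.lt_log_iff_exp_lt (by linarith)).2 h1t
      exact if_neg (not_le.2 this)
    have hg1 : deriv (fun t => (Real.log (1+t) - M) * Real.exp (θ*M)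
          + (1/θ) * (Real.exp (θ*M) - 1)) =ᶠ[nhds s]
        (fun t => Real.exp (θ*M) / (1+t)) :=
      Filter.eventuallyEq_of_mem (Ioi_mem_nhds hm1)
        (fun t ht => (hasDerivAt_Lcomp θ M _ ht).deriv)
    have key : deriv (deriv (fun t => PhiFn θ M (Real.log (1 + t)))) s
        = -(Real.exp (θ*M) / (1+s)^2) := by
      rw [(hFg.deriv.trans hg1).deriv_eq, (hasDerivAt_D2 _ hm1).deriv]
    constructor
    · rw [key, neg_neg]; positivity
    · rw [key, neg_neg, div_le_div_iff₀ (by positivity) h1s]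
      have hExp : Real.exp (θ*M) = Real.exp ((θ-1)*M) * Real.exp M := by
        rw [← Real.exp_add]; ring_nf
      nlinarith [mul_le_mul_of_nonneg_left hsub.le
          (mul_nonneg (Real.exp_pos ((θ-1)*M)).le h1s.le),
        mul_nonneg (mul_nonneg (by linarith : (0:ℝ) ≤ 1-θ) h1s.le) h1s.le]

lemma part3_sup {s : ℝ} (hs : 0 ≤ s) :
    (⨆ p : {q : ℝ × ℝ // q.1 ∈ Set.Ioo (0:ℝ) 1 ∧ 0 < q.2},
      PhiFn p.val.1 p.val.2 (Real.log (1 + s))) = s := by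
  have h1s : (0:ℝ) < 1 + s := by linarith
  set b := Real.log (1+s) with hbdef
  have hb : 0 ≤ b := Real.log_nonneg (by linarith)
  haveI : Nonempty {q : ℝ × ℝ // q.1 ∈ Set.Ioo (0:ℝ) 1 ∧ 0 < q.2} :=
    ⟨⟨(1/2, 1), ⟨by norm_num, by norm_num⟩, by norm_num⟩⟩
  have hbdd : BddAbove (Set.range fun p : {q : ℝ × ℝ // q.1 ∈ Set.Ioo (0:ℝ) 1 ∧ 0 < q.2} =>
      PhiFn p.val.1 p.val.2 b) := by
    refine ⟨s, ?_⟩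
    rintro _ ⟨p, rfl⟩
    exact phi_le_id p.2.1.1 p.2.1.2.le hs
  apply le_antisymm
  · exact ciSup_le fun p => phi_le_id p.2.1.1 p.2.1.2.le hs
  · have hcont : ContinuousAt (fun x : ℝ => (1/x) * (Real.exp (x*b) - 1)) 1 := by
      apply ContinuousAt.mul
      · exact ContinuousAt.div continuousAt_const continuousAt_id one_ne_zero
      · exact (Real.continuous_exp.continuousAt.comp
          (continuousAt_id.mul continuousAt_const)).sub continuousAt_const
    have hval : (fun x : ℝ => (1/x) * (Real.exp (x*b) - 1)) 1 = s := by
      simp only [one_mul, one_div, inv_one]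
      rw [hbdef, Real.exp_log h1s]; ring
    have htend : Filter.Tendsto (fun x : ℝ => (1/x) * (Real.exp (x*b) - 1))
        (nhdsWithin 1 (Set.Iio 1)) (nhds s) := by
      rw [← hval]; exact hcont.tendsto.mono_left nhdsWithin_le_nhds
    refine le_of_tendsto htend ?_
    filter_upwards [Ioo_mem_nhdsLT_of_mem
      (show (1:ℝ) ∈ Set.Ioc 0 1 by constructor <;> norm_num)] with x hx
    have heq : (1/x) * (Real.exp (x*b) - 1) = PhiFn x (b+1) b := by
      unfold PhiFn
      rw [if_pos (by linarith : b ≤ b+1)]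
    rw [heq]
    exact le_ciSup hbdd ⟨(x, b+1), hx, show (0:ℝ) < b+1 by linarith⟩

/-- Lemma 3.2: with `β(s) = log(1+s)`, one has `Φ' ≥ 1`,
`0 ≤ −(Φ∘β)'' ≤ (1−θ+e^{(θ−1)M})/(1+s)` (away from the kink `β(s)=M`),
and `Φ(β(s)) ↑ s` as `M ↑ ∞`, `θ ↑ 1`. -/
theorem stmt_7 (θ M : ℝ) (hθ : θ ∈ Set.Ioo (0:ℝ) 1) (hM : 0 < M) :
    (∀ s : ℝ, 0 ≤ s → 1 ≤ deriv (PhiFn θ M) s) ∧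
    (∀ s : ℝ, 0 ≤ s → Real.log (1 + s) ≠ M →
      0 ≤ -(deriv (deriv (fun t => PhiFn θ M (Real.log (1 + t)))) s) ∧
      -(deriv (deriv (fun t => PhiFn θ M (Real.log (1 + t)))) s)
        ≤ (1 - θ + Real.exp ((θ - 1) * M)) / (1 + s)) ∧
    (∀ s : ℝ, 0 ≤ s →
      PhiFn θ M (Real.log (1 + s)) ≤ s ∧
      (∀ θ' M', θ ≤ θ' → θ' < 1 → M ≤ M' →
        PhiFn θ M (Real.log (1 + s)) ≤ PhiFn θ' M' (Real.log (1 + s))) ∧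
      (⨆ p : {q : ℝ × ℝ // q.1 ∈ Set.Ioo (0:ℝ) 1 ∧ 0 < q.2},
        PhiFn p.val.1 p.val.2 (Real.log (1 + s))) = s) := by
  obtain ⟨hθ0, hθ1⟩ := hθ
  refine ⟨fun s hs => part1 hθ0 hθ1 hM hs,
    fun s hs hne => part2 hθ0 hθ1 hM hs hne,
    fun s hs => ⟨phi_le_id hθ0 hθ1.le hs, fun θ' M' hθθ' hθ'1 hMM' => ?_, part3_sup hs⟩⟩
  calc PhiFn θ M (Real.log (1 + s)) ≤ PhiFn θ M' (Real.log (1 + s)) := phi_mono_M hθ0 hMM'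
    _ ≤ PhiFn θ' M' (Real.log (1 + s)) :=
        phi_mono_theta hθ0 hθθ' (lt_of_lt_of_le hM hMM')
          (Real.log_nonneg (by linarith))
end

section
/- Let Y be a finite measure space and (ψ_n) nonnegative measurable functions on Y that r-converge to a function ψ which is almost everywhere finite: min(ψ_n, M) ⇀ T̄_M weak-* in L^∞ for each M with T̄_M ↑ ψ a.e. Then (ψ_n) is asymptotically bounded in measure: for every ε > 0 there exist m and n_0 such that meas{y : ψ_n(y) ≥ m} < ε for all n ≥ n_0. -/
open MeasureTheory Filter

private lemma integral_le_of_ae_le' {Y : Type*} [MeasurableSpace Y] (ν : Measure Y)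
    (f g : Y → ℝ) (hg : Integrable g ν) (h : ∀ᵐ y ∂ν, f y ≤ g y)
    (hg0 : 0 ≤ ∫ y, g y ∂ν) : ∫ y, f y ∂ν ≤ ∫ y, g y ∂ν := by
  by_cases hf : Integrable f ν
  · exact integral_mono_ae hf hg h
  · rw [integral_undef hf]; exact hg0

/-- If `(ψ_n)` are nonnegative measurable functions on a finite measure space that
r-converge to an a.e. finite (real-valued) `ψ` — i.e. `min(ψ_n, M) ⇀ T̄_M` weak-* in
`L^∞` for each `M` with `T̄_M ↑ ψ` a.e. — then `(ψ_n)` is asymptotically bounded in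
measure: for every `ε > 0` there are `m` and `n₀` with `ν{ψ_n ≥ m} < ε` for `n ≥ n₀`. -/
theorem stmt_10 {Y : Type*} [MeasurableSpace Y] (ν : Measure Y) [IsFiniteMeasure ν]
    (ψn : ℕ → Y → ℝ) (ψ : Y → ℝ)
    (hψnmeas : ∀ n, Measurable (ψn n)) (hψmeas : Measurable ψ)
    (hψn0 : ∀ n y, 0 ≤ ψn n y)
    (Tbar : ℕ → Y → ℝ)
    (hweak : ∀ M : ℕ, ∀ g : Y → ℝ, Integrable g ν →
      Tendsto (fun n => ∫ y, min (ψn n y) (M : ℝ) * g y ∂ν) atTop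
        (nhds (∫ y, Tbar M y * g y ∂ν)))
    (hmono : ∀ᵐ y ∂ν, Monotone (fun M => Tbar M y) ∧
      Tendsto (fun M => Tbar M y) atTop (nhds (ψ y))) :
    ∀ ε : ℝ, 0 < ε → ∃ m : ℝ, ∃ n₀ : ℕ, ∀ n, n₀ ≤ n →
      ν {y | m ≤ ψn n y} < ENNReal.ofReal ε := by
  intro ε hε
  have hε2 : (0:ℝ) < ε / 2 := by linarith
  -- Step 1: choose K : ℕ with ν {K < ψ} < ε/2
  have hK : ∃ K : ℕ, ν {y | (K:ℝ) < ψ y} < ENNReal.ofReal (ε / 2) := by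
    set s : ℕ → Set Y := fun k => {y | (k:ℝ) < ψ y} with hs
    have hmeas : ∀ k, NullMeasurableSet (s k) ν := fun k =>
      (measurableSet_lt measurable_const hψmeas).nullMeasurableSet
    have hanti : Antitone s := by
      intro k l hkl y hy
      exact lt_of_le_of_lt (by exact_mod_cast hkl : (k:ℝ) ≤ l) hy
    have hempty : (⋂ k, s k) = ∅ := by
      ext y
      simp only [Set.mem_iInter, Set.mem_empty_iff_false, iff_false, not_forall]
      obtain ⟨k, hk⟩ := exists_nat_gt (ψ y)
      exact ⟨k, by simp [hs, not_lt.2 hk.le]⟩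
    have htend : Tendsto (ν ∘ s) atTop (nhds 0) := by
      have := tendsto_measure_iInter_atTop (μ := ν) hmeas hanti ⟨0, measure_ne_top ν _⟩
      rwa [hempty, measure_empty] at this
    have hev := htend.eventually_lt_const (ENNReal.ofReal_pos.mpr hε2)
    obtain ⟨K, hK⟩ := hev.exists
    exact ⟨K, hK⟩
  obtain ⟨K, hKmeas⟩ := hK
  set A : Set Y := {y | ψ y ≤ (K:ℝ)} with hA
  have hAmeas : MeasurableSet A := measurableSet_le hψmeas measurable_const
  set g : Y → ℝ := A.indicator (fun _ => 1) with hg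
  have hgint : Integrable g ν := by
    exact (integrable_const (1:ℝ)).indicator hAmeas
  set C : ℝ := (K:ℝ) * (ν Set.univ).toReal with hC
  have hC0 : 0 ≤ C := mul_nonneg (Nat.cast_nonneg _) ENNReal.toReal_nonneg
  -- choose M : ℕ with (C+1)/M < ε/2
  obtain ⟨M, hM⟩ := exists_nat_gt (2 * (C + 1) / ε)
  have hMpos : (0:ℝ) < M := lt_of_le_of_lt (by positivity) hM
  -- the limit is bounded by C
  have hLbound : (∫ y, Tbar M y * g y ∂ν) ≤ C := by
    have hKg : Integrable (fun y => (K:ℝ) * g y) ν := hgint.const_mul _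
    have hae : ∀ᵐ y ∂ν, Tbar M y * g y ≤ (K:ℝ) * g y := by
      filter_upwards [hmono] with y ⟨hm, ht⟩
      by_cases hyA : y ∈ A
      · have h1 : Tbar M y ≤ ψ y := hm.ge_of_tendsto ht M
        have h2 : ψ y ≤ (K:ℝ) := hyA
        simp [hg, Set.indicator_of_mem hyA]
        linarith
      · simp [hg, Set.indicator_of_notMem hyA]
    have h0 : 0 ≤ ∫ y, (K:ℝ) * g y ∂ν := by
      apply integral_nonneg
      intro y
      by_cases hyA : y ∈ A <;> simp [hg, Set.indicator_apply, hyA, Nat.cast_nonneg]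
    have := integral_le_of_ae_le' ν _ _ hKg hae h0
    refine this.trans ?_
    rw [integral_const_mul]
    have : ∫ y, g y ∂ν = (ν A).toReal := by
      rw [hg, integral_indicator hAmeas]
      simp [Measure.restrict_apply_univ, Measure.real]
    rw [this, hC]
    have h3 : (ν A).toReal ≤ (ν Set.univ).toReal :=
      ENNReal.toReal_mono (measure_ne_top ν _) (measure_mono (Set.subset_univ A))
    exact mul_le_mul_of_nonneg_left h3 (Nat.cast_nonneg _)
  -- eventually the truncated integrals are ≤ C + 1
  have hev : ∀ᶠ n in atTop, (∫ y, min (ψn n y) (M:ℝ) * g y ∂ν) ≤ C + 1 := by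
    have := (hweak M g hgint).eventually (eventually_le_nhds
      (lt_of_le_of_lt hLbound (by linarith) : (∫ y, Tbar M y * g y ∂ν) < C + 1))
    exact this
  obtain ⟨n₀, hn₀⟩ := hev.exists_forall_of_atTop
  refine ⟨(M:ℝ), n₀, fun n hn => ?_⟩
  -- Chebyshev on the set S = {M ≤ ψn n} ∩ A
  set S : Set Y := {y | (M:ℝ) ≤ ψn n y} ∩ A with hS
  have hSmeas : MeasurableSet S :=
    (measurableSet_le measurable_const (hψnmeas n)).inter hAmeas
  have hfint : Integrable (fun y => min (ψn n y) (M:ℝ) * g y) ν := by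
    refine Integrable.mono' (integrable_const (M:ℝ)) ?_ ?_
    · exact (((hψnmeas n).min measurable_const).mul
        ((measurable_const.indicator hAmeas))).aestronglyMeasurable
    · filter_upwards with y
      have h1 : 0 ≤ min (ψn n y) (M:ℝ) := le_min (hψn0 n y) (Nat.cast_nonneg _)
      have h2 : min (ψn n y) (M:ℝ) ≤ (M:ℝ) := min_le_right _ _
      by_cases hyA : y ∈ A
      · simp [hg, Set.indicator_of_mem hyA, abs_of_nonneg h1, h2]
      · simp [hg, Set.indicator_of_notMem hyA, Nat.cast_nonneg]
  have hcheb : (M:ℝ) * (ν S).toReal ≤ ∫ y, min (ψn n y) (M:ℝ) * g y ∂ν := by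
    have hind : Integrable (S.indicator (fun _ => (M:ℝ))) ν :=
      (integrable_const _).indicator hSmeas
    have hle : ∀ y, S.indicator (fun _ => (M:ℝ)) y ≤ min (ψn n y) (M:ℝ) * g y := by
      intro y
      by_cases hyS : y ∈ S
      · have hyA : y ∈ A := hyS.2
        have hyM : (M:ℝ) ≤ ψn n y := hyS.1
        simp [Set.indicator_of_mem hyS, hg, Set.indicator_of_mem hyA, min_eq_right hyM]
      · have h1 : 0 ≤ min (ψn n y) (M:ℝ) := le_min (hψn0 n y) (Nat.cast_nonneg _)
        have h2 : 0 ≤ g y := by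
          by_cases hyA : y ∈ A <;> simp [hg, Set.indicator_apply, hyA]
        simpa [Set.indicator_of_notMem hyS] using mul_nonneg h1 h2
    have := integral_mono hind hfint hle
    refine le_trans (le_of_eq ?_) this
    rw [integral_indicator hSmeas]
    simp [mul_comm, Measure.real]
  have hto : (ν S).toReal < ε / 2 := by
    have h1 : (M:ℝ) * (ν S).toReal ≤ C + 1 := hcheb.trans (hn₀ n hn)
    have h2 : (ν S).toReal ≤ (C + 1) / M := by
      rw [le_div_iff₀ hMpos]; linarith [h1]
    refine lt_of_le_of_lt h2 ?_
    rw [div_lt_iff₀ hMpos]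
    rw [div_lt_iff₀ hε] at hM
    nlinarith
  have hSlt : ν S < ENNReal.ofReal (ε / 2) := by
    exact (ENNReal.lt_ofReal_iff_toReal_lt (measure_ne_top ν S)).mpr hto
  have hsub : {y | (M:ℝ) ≤ ψn n y} ⊆ S ∪ Aᶜ := by
    intro y hy
    by_cases hyA : y ∈ A
    · exact Or.inl ⟨hy, hyA⟩
    · exact Or.inr hyA
  have hAc : ν Aᶜ < ENNReal.ofReal (ε / 2) := by
    have : Aᶜ = {y | (K:ℝ) < ψ y} := by
      ext y; simp [hA, not_le]
    rwa [this]
  calc ν {y | (M:ℝ) ≤ ψn n y} ≤ ν S + ν Aᶜ :=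
        le_trans (measure_mono hsub) (measure_union_le _ _)
    _ < ENNReal.ofReal (ε / 2) + ENNReal.ofReal (ε / 2) :=
        ENNReal.add_lt_add hSlt hAc
    _ = ENNReal.ofReal ε := by
        rw [← ENNReal.ofReal_add hε2.le hε2.le]; ring_nf
end

section
/- Let O ⊂ ℝ^d be open and (u_n) a bounded sequence in L¹_loc(O) such that β(u_n) → β(u) in the sense of distributions (tested against C_c(O)) for every β ∈ W²'∞_loc(ℝ) with β'' of compact support. Then u_n → u strongly in L¹_loc(O). -/
open MeasureTheory Filter Set intervalIntegral

noncomputable def pfun (k t : ℝ) : ℝ :=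
  1 - Real.smoothTransition (t - k) - Real.smoothTransition (-t - k)

noncomputable def qfun (k t : ℝ) : ℝ :=
  Real.smoothTransition (t - k) - Real.smoothTransition (-t - k)

noncomputable def betaK (k s : ℝ) : ℝ := ∫ t in (0:ℝ)..s, pfun k t

noncomputable def gammaK (k s : ℝ) : ℝ := ∫ t in (0:ℝ)..s, qfun k t

lemma contDiff_pfun (k : ℝ) {n : ℕ∞} : ContDiff ℝ n (pfun k) := by
  unfold pfun
  exact (contDiff_const.sub
      (Real.smoothTransition.contDiff.comp (contDiff_id.sub contDiff_const))).sub
    (Real.smoothTransition.contDiff.comp (contDiff_id.neg.sub contDiff_const))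

lemma contDiff_qfun (k : ℝ) {n : ℕ∞} : ContDiff ℝ n (qfun k) := by
  unfold qfun
  exact ((Real.smoothTransition.contDiff.comp (contDiff_id.sub contDiff_const))).sub
    (Real.smoothTransition.contDiff.comp (contDiff_id.neg.sub contDiff_const))

lemma cont_pfun (k : ℝ) : Continuous (pfun k) := (contDiff_pfun k (n := 0)).continuous

lemma cont_qfun (k : ℝ) : Continuous (qfun k) := (contDiff_qfun k (n := 0)).continuous

lemma hasDerivAt_betaK (k s : ℝ) : HasDerivAt (betaK k) (pfun k s) s :=
  ((cont_pfun k).integral_hasStrictDerivAt 0 s).hasDerivAt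

lemma hasDerivAt_gammaK (k s : ℝ) : HasDerivAt (gammaK k) (qfun k s) s :=
  ((cont_qfun k).integral_hasStrictDerivAt 0 s).hasDerivAt

lemma deriv_betaK (k : ℝ) : deriv (betaK k) = pfun k :=
  funext fun s => (hasDerivAt_betaK k s).deriv

lemma deriv_gammaK (k : ℝ) : deriv (gammaK k) = qfun k :=
  funext fun s => (hasDerivAt_gammaK k s).deriv

lemma contDiff2_betaK (k : ℝ) : ContDiff ℝ 2 (betaK k) := by
  rw [show (2 : WithTop ℕ∞) = 1 + 1 by norm_num, contDiff_succ_iff_deriv]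
  refine ⟨fun s => (hasDerivAt_betaK k s).differentiableAt, by simp, ?_⟩
  rw [deriv_betaK]
  exact contDiff_pfun k (n := 1)

lemma contDiff2_gammaK (k : ℝ) : ContDiff ℝ 2 (gammaK k) := by
  rw [show (2 : WithTop ℕ∞) = 1 + 1 by norm_num, contDiff_succ_iff_deriv]
  refine ⟨fun s => (hasDerivAt_gammaK k s).differentiableAt, by simp, ?_⟩
  rw [deriv_gammaK]
  exact contDiff_qfun k (n := 1)

lemma pfun_eq_zero {k t : ℝ} (hk : 0 ≤ k) (ht : k + 1 ≤ |t|) : pfun k t = 0 := by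
  rcases le_abs.mp ht with h | h
  · have h1 : Real.smoothTransition (t - k) = 1 :=
      Real.smoothTransition.one_of_one_le (by linarith)
    have h2 : Real.smoothTransition (-t - k) = 0 :=
      Real.smoothTransition.zero_of_nonpos (by linarith)
    simp [pfun, h1, h2]
  · have h1 : Real.smoothTransition (t - k) = 0 :=
      Real.smoothTransition.zero_of_nonpos (by linarith)
    have h2 : Real.smoothTransition (-t - k) = 1 :=
      Real.smoothTransition.one_of_one_le (by linarith)
    simp [pfun, h1, h2]

lemma pfun_nonneg {k : ℝ} (hk : 0 ≤ k) (t : ℝ) : 0 ≤ pfun k t := by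
  unfold pfun
  rcases le_total t (-k) with h | h
  · have h1 : Real.smoothTransition (t - k) = 0 :=
      Real.smoothTransition.zero_of_nonpos (by linarith)
    have := Real.smoothTransition.le_one (-t - k)
    linarith
  · have h2 : Real.smoothTransition (-t - k) = 0 :=
      Real.smoothTransition.zero_of_nonpos (by linarith)
    have := Real.smoothTransition.le_one (t - k)
    linarith

lemma pfun_le_one {k : ℝ} (t : ℝ) : pfun k t ≤ 1 := by
  unfold pfun
  have := Real.smoothTransition.nonneg (t - k)
  have := Real.smoothTransition.nonneg (-t - k)
  linarith

lemma hcs_pfun {k : ℝ} (hk : 0 ≤ k) : HasCompactSupport (pfun k) := by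
  apply HasCompactSupport.intro (isCompact_Icc (a := -(k+1)) (b := k+1))
  intro x hx
  apply pfun_eq_zero hk
  rcases not_and_or.mp (fun h : -(k+1) ≤ x ∧ x ≤ k+1 => hx ⟨h.1, h.2⟩) with h | h
  · push_neg at h; rw [le_abs]; right; linarith
  · push_neg at h; rw [le_abs]; left; linarith

lemma hcs_iteratedDeriv2_betaK {k : ℝ} (hk : 0 ≤ k) :
    HasCompactSupport (iteratedDeriv 2 (betaK k)) := by
  have : iteratedDeriv 2 (betaK k) = deriv (pfun k) := by
    rw [iteratedDeriv_succ, iteratedDeriv_one, deriv_betaK]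
  rw [this]
  exact (hcs_pfun hk).deriv

lemma deriv_qfun_eq_zero {k t : ℝ} (hk : 0 ≤ k) (ht : k + 1 < |t|) : deriv (qfun k) t = 0 := by
  rcases lt_abs.mp ht with h | h
  · have : qfun k =ᶠ[nhds t] fun _ => (1:ℝ) := by
      filter_upwards [Ioi_mem_nhds h] with x hx
      have hx' : (k+1:ℝ) < x := hx
      have h1 : Real.smoothTransition (x - k) = 1 :=
        Real.smoothTransition.one_of_one_le (by linarith)
      have h2 : Real.smoothTransition (-x - k) = 0 :=
        Real.smoothTransition.zero_of_nonpos (by linarith)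
      simp [qfun, h1, h2]
    rw [this.deriv_eq, deriv_const]
  · have h' : t < -(k+1) := by linarith
    have : qfun k =ᶠ[nhds t] fun _ => (-1:ℝ) := by
      filter_upwards [Iio_mem_nhds h'] with x hx
      have hx' : x < -(k+1) := hx
      have h1 : Real.smoothTransition (x - k) = 0 :=
        Real.smoothTransition.zero_of_nonpos (by linarith)
      have h2 : Real.smoothTransition (-x - k) = 1 :=
        Real.smoothTransition.one_of_one_le (by linarith)
      simp [qfun, h1, h2]
    rw [this.deriv_eq, deriv_const]

lemma hcs_iteratedDeriv2_gammaK {k : ℝ} (hk : 0 ≤ k) :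
    HasCompactSupport (iteratedDeriv 2 (gammaK k)) := by
  have h : iteratedDeriv 2 (gammaK k) = deriv (qfun k) := by
    rw [iteratedDeriv_succ, iteratedDeriv_one, deriv_gammaK]
  rw [h]
  apply HasCompactSupport.intro (isCompact_Icc (a := -(k+1)) (b := k+1))
  intro x hx
  apply deriv_qfun_eq_zero hk
  rcases not_and_or.mp (fun h : -(k+1) ≤ x ∧ x ≤ k+1 => hx ⟨h.1, h.2⟩) with h | h
  · push_neg at h; rw [lt_abs]; right; linarith
  · push_neg at h; rw [lt_abs]; left; linarith

lemma gammaK_eq_of_nonneg {k s : ℝ} (hk : 0 ≤ k) (hs : 0 ≤ s) :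
    gammaK k s = ∫ t in (0:ℝ)..s, Real.smoothTransition (t - k) := by
  unfold gammaK
  apply integral_congr
  rw [uIcc_of_le hs]
  intro t ht
  have h2 : Real.smoothTransition (-t - k) = 0 :=
    Real.smoothTransition.zero_of_nonpos (by have := ht.1; linarith)
  simp [qfun, h2]

lemma gammaK_nonneg_of {k s : ℝ} (hk : 0 ≤ k) (hs : 0 ≤ s) : 0 ≤ gammaK k s := by
  rw [gammaK_eq_of_nonneg hk hs]
  exact integral_nonneg hs fun t _ => Real.smoothTransition.nonneg _

lemma st_intervalIntegrable (k a b : ℝ) :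
    IntervalIntegrable (fun t => Real.smoothTransition (t - k)) volume a b :=
  (Real.smoothTransition.continuous.comp (continuous_id.sub continuous_const)).intervalIntegrable a b

lemma gammaK_le_of {k s : ℝ} (hk : 0 ≤ k) (hs : 0 ≤ s) : gammaK k s ≤ max (s - k) 0 := by
  rw [gammaK_eq_of_nonneg hk hs]
  by_cases hsk : s ≤ k
  · have : (∫ t in (0:ℝ)..s, Real.smoothTransition (t - k)) = ∫ t in (0:ℝ)..s, (0:ℝ) := by
      apply integral_congr
      rw [uIcc_of_le hs]
      intro t ht
      exact Real.smoothTransition.zero_of_nonpos (by have := ht.2; linarith)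
    rw [this]
    simp
  · push_neg at hsk
    rw [← integral_add_adjacent_intervals (st_intervalIntegrable k 0 k) (st_intervalIntegrable k k s)]
    have h1 : (∫ t in (0:ℝ)..k, Real.smoothTransition (t - k)) = ∫ t in (0:ℝ)..k, (0:ℝ) := by
      apply integral_congr
      rw [uIcc_of_le hk]
      intro t ht
      exact Real.smoothTransition.zero_of_nonpos (by have := ht.2; linarith)
    have h2 : (∫ t in k..s, Real.smoothTransition (t - k)) ≤ ∫ t in k..s, (1:ℝ) := by
      apply integral_mono_on hsk.le (st_intervalIntegrable k k s) (intervalIntegrable_const)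
      intro t _
      exact Real.smoothTransition.le_one _
    have h3 : (∫ t in k..s, (1:ℝ)) = s - k := by simp
    rw [h1, intervalIntegral.integral_zero, zero_add]
    calc (∫ t in k..s, Real.smoothTransition (t - k)) ≤ s - k := h3 ▸ h2
      _ ≤ max (s - k) 0 := le_max_left _ _

lemma gammaK_ge_of {k s : ℝ} (hk : 0 ≤ k) (hs : 0 ≤ s) : s - (k + 1) ≤ gammaK k s := by
  by_cases hs1 : s ≤ k + 1
  · have := gammaK_nonneg_of hk hs
    linarith
  · push_neg at hs1
    rw [gammaK_eq_of_nonneg hk hs,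
      ← integral_add_adjacent_intervals (st_intervalIntegrable k 0 (k+1)) (st_intervalIntegrable k (k+1) s)]
    have h1 : (0:ℝ) ≤ ∫ t in (0:ℝ)..(k+1), Real.smoothTransition (t - k) :=
      integral_nonneg (by linarith) fun t _ => Real.smoothTransition.nonneg _
    have h2 : (∫ t in (k+1)..s, (1:ℝ)) ≤ ∫ t in (k+1)..s, Real.smoothTransition (t - k) := by
      apply integral_mono_on hs1.le intervalIntegrable_const (st_intervalIntegrable k (k+1) s)
      intro t ht
      exact (Real.smoothTransition.one_of_one_le (by have := ht.1; linarith)).ge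
    have h3 : (∫ t in (k+1)..s, (1:ℝ)) = s - (k+1) := by simp
    linarith [h3 ▸ h2]

lemma betaK_eq_of {k s : ℝ} (hk : 0 ≤ k) (hs : 0 ≤ s) : betaK k s = s - gammaK k s := by
  have hq : IntervalIntegrable (qfun k) volume 0 s := (cont_qfun k).intervalIntegrable 0 s
  have h1 : betaK k s = ∫ t in (0:ℝ)..s, (1 - qfun k t) := by
    unfold betaK
    apply integral_congr
    rw [uIcc_of_le hs]
    intro t ht
    have h2 : Real.smoothTransition (-t - k) = 0 :=
      Real.smoothTransition.zero_of_nonpos (by have := ht.1; linarith)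
    simp [pfun, qfun, h2]
  rw [h1, integral_sub intervalIntegrable_const hq]
  simp [gammaK]

lemma betaK_nonneg_of {k s : ℝ} (hk : 0 ≤ k) (hs : 0 ≤ s) : 0 ≤ betaK k s :=
  integral_nonneg hs fun t _ => pfun_nonneg hk t

lemma qfun_neg (k x : ℝ) : qfun k (-x) = -qfun k x := by
  unfold qfun
  rw [neg_neg]
  ring

lemma pfun_neg (k x : ℝ) : pfun k (-x) = pfun k x := by
  unfold pfun
  rw [neg_neg]
  ring

lemma gammaK_neg (k s : ℝ) : gammaK k (-s) = gammaK k s := by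
  have h1 : (∫ x in s..(0:ℝ), qfun k (-x)) = ∫ x in (0:ℝ)..(-s), qfun k x := by
    rw [integral_comp_neg (fun x => qfun k x)]
    norm_num
  have h2 : (∫ x in s..(0:ℝ), qfun k (-x)) = - ∫ x in s..(0:ℝ), qfun k x := by
    simp only [qfun_neg]
    exact intervalIntegral.integral_neg
  show (∫ x in (0:ℝ)..(-s), qfun k x) = _
  rw [← h1, h2, integral_symm, neg_neg]
  rfl

lemma betaK_neg (k s : ℝ) : betaK k (-s) = -betaK k s := by
  have h1 : (∫ x in s..(0:ℝ), pfun k (-x)) = ∫ x in (0:ℝ)..(-s), pfun k x := by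
    rw [integral_comp_neg (fun x => pfun k x)]
    norm_num
  have h2 : (∫ x in s..(0:ℝ), pfun k (-x)) = ∫ x in s..(0:ℝ), pfun k x := by
    simp only [pfun_neg]
  show (∫ x in (0:ℝ)..(-s), pfun k x) = _
  rw [← h1, h2, integral_symm]
  rfl

lemma gammaK_nonneg {k : ℝ} (hk : 0 ≤ k) (s : ℝ) : 0 ≤ gammaK k s := by
  rcases le_total 0 s with hs | hs
  · exact gammaK_nonneg_of hk hs
  · rw [← gammaK_neg]
    exact gammaK_nonneg_of hk (by linarith)

lemma gammaK_le {k : ℝ} (hk : 0 ≤ k) (s : ℝ) : gammaK k s ≤ max (|s| - k) 0 := by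
  rcases le_total 0 s with hs | hs
  · rw [abs_of_nonneg hs]; exact gammaK_le_of hk hs
  · rw [abs_of_nonpos hs, ← gammaK_neg]
    exact gammaK_le_of hk (by linarith)

lemma gammaK_ge {k : ℝ} (hk : 0 ≤ k) (s : ℝ) : |s| - (k + 1) ≤ gammaK k s := by
  rcases le_total 0 s with hs | hs
  · rw [abs_of_nonneg hs]; exact gammaK_ge_of hk hs
  · rw [abs_of_nonpos hs, ← gammaK_neg]
    exact gammaK_ge_of hk (by linarith)

lemma abs_sub_betaK {k : ℝ} (hk : 0 ≤ k) (s : ℝ) : |s - betaK k s| = gammaK k s := by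
  rcases le_total 0 s with hs | hs
  · rw [betaK_eq_of hk hs]
    rw [show s - (s - gammaK k s) = gammaK k s by ring]
    exact abs_of_nonneg (gammaK_nonneg_of hk hs)
  · have hb : betaK k s = -betaK k (-s) := by rw [← betaK_neg, neg_neg]
    rw [hb, show s - -betaK k (-s) = -(-s - betaK k (-s)) by ring, abs_neg,
      ← gammaK_neg]
    have hs' : 0 ≤ -s := by linarith
    rw [betaK_eq_of hk hs', show -s - (-s - gammaK k (-s)) = gammaK k (-s) by ring]
    exact abs_of_nonneg (gammaK_nonneg_of hk hs')

lemma abs_betaK_le {k : ℝ} (hk : 0 ≤ k) (s : ℝ) : |betaK k s| ≤ k + 1 := by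
  have key : ∀ r : ℝ, 0 ≤ r → |betaK k r| ≤ k + 1 := by
    intro r hr
    rw [abs_of_nonneg (betaK_nonneg_of hk hr), betaK_eq_of hk hr]
    have := gammaK_ge_of hk hr
    linarith
  rcases le_total 0 s with hs | hs
  · exact key s hs
  · have hb : betaK k s = -betaK k (-s) := by rw [← betaK_neg, neg_neg]
    rw [hb, abs_neg]
    exact key (-s) (by linarith)

lemma cont_betaK (k : ℝ) : Continuous (betaK k) := (contDiff2_betaK k).continuous

lemma cont_gammaK (k : ℝ) : Continuous (gammaK k) := (contDiff2_gammaK k).continuous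

lemma contDiff2_betaK_sq (k : ℝ) : ContDiff ℝ 2 (fun s => betaK k s ^ 2) :=
  (contDiff2_betaK k).pow 2

lemma hcs_iteratedDeriv2_betaK_sq {k : ℝ} (hk : 0 ≤ k) :
    HasCompactSupport (iteratedDeriv 2 (fun s => betaK k s ^ 2)) := by
  have hd : deriv (fun s => betaK k s ^ 2) =
      (fun s => (2:ℝ) * betaK k s ^ 1) * pfun k := by
    funext s
    exact ((hasDerivAt_betaK k s).pow 2).deriv
  have : iteratedDeriv 2 (fun s => betaK k s ^ 2) =
      deriv ((fun s => (2:ℝ) * betaK k s ^ 1) * pfun k) := by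
    rw [iteratedDeriv_succ, iteratedDeriv_one, hd]
  rw [this]
  exact ((hcs_pfun hk).mul_left).deriv

lemma abs_le_sq_div {x δ : ℝ} (hδ : 0 < δ) : |x| ≤ x^2/(2*δ) + δ/2 := by
  have h : x^2/(2*δ) + δ/2 = (x^2 + δ^2)/(2*δ) := by field_simp
  rw [h, le_div_iff₀ (by positivity)]
  nlinarith [sq_nonneg (|x| - δ), sq_abs x]

lemma cutoff_exists {X : Type*} [TopologicalSpace X] [T2Space X] [LocallyCompactSpace X]
    [RegularSpace X] {K U : Set X} (hK : IsCompact K) (hU : IsOpen U) (hKU : K ⊆ U) :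
    ∃ χ : X → ℝ, Continuous χ ∧ HasCompactSupport χ ∧ tsupport χ ⊆ U ∧ Set.EqOn χ 1 K ∧
      ∀ x, χ x ∈ Set.Icc (0:ℝ) 1 := by
  obtain ⟨L, hL, hKL, hLU⟩ := exists_compact_between hK hU hKU
  have hdisj : Disjoint K (interior L)ᶜ := Set.disjoint_left.mpr fun x hx hx' => hx' (hKL hx)
  obtain ⟨f, hf1, hf0, hfc, hficc⟩ :=
    exists_continuous_one_zero_of_isCompact hK isOpen_interior.isClosed_compl hdisj
  refine ⟨f, f.continuous, hfc, ?_, hf1, hficc⟩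
  have hsupp : Function.support f ⊆ interior L := by
    intro x hx
    by_contra hx'
    exact hx (hf0 hx')
  calc tsupport (⇑f) ⊆ closure (interior L) := closure_mono hsupp
    _ ⊆ L := closure_minimal interior_subset hL.isClosed
    _ ⊆ U := hLU

set_option maxHeartbeats 2000000 in
/-- Lemma 5.2 of the paper: if `(u_n)` is bounded in `L¹_loc(O)` and
`β(u_n) → β(u)` in the sense of distributions for every `β ∈ W²'∞_loc(ℝ)` with `β''`
compactly supported, then `u_n → u` strongly in `L¹_loc(O)`. -/
theorem stmt_12 {d : ℕ} (O : Set (EuclideanSpace ℝ (Fin d))) (hO : IsOpen O)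
    (un : ℕ → EuclideanSpace ℝ (Fin d) → ℝ) (u : EuclideanSpace ℝ (Fin d) → ℝ)
    (hunmeas : ∀ n, Measurable (un n)) (humeas : Measurable u)
    (hbdd : ∀ K : Set (EuclideanSpace ℝ (Fin d)), IsCompact K → K ⊆ O →
      (∀ n, IntegrableOn (un n) K volume) ∧ IntegrableOn u K volume ∧
      ∃ C : ℝ, ∀ n, (∫ y in K, |un n y|) ≤ C)
    (hconv : ∀ β : ℝ → ℝ, ContDiff ℝ 2 β → HasCompactSupport (iteratedDeriv 2 β) →
      ∀ χ : EuclideanSpace ℝ (Fin d) → ℝ, Continuous χ → HasCompactSupport χ →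
      tsupport χ ⊆ O →
      Tendsto (fun n => ∫ y, β (un n y) * χ y) atTop (nhds (∫ y, β (u y) * χ y))) :
    ∀ K : Set (EuclideanSpace ℝ (Fin d)), IsCompact K → K ⊆ O →
      Tendsto (fun n => ∫ y in K, |un n y - u y|) atTop (nhds 0) := by
  intro K hK hKO
  obtain ⟨χ, hχc, hχcs, hχsupp, hχ1, hχicc⟩ := cutoff_exists hK hO hKO
  set K'' := tsupport χ with hK''def
  have hK''cpt : IsCompact K'' := hχcs
  have hK''O : K'' ⊆ O := hχsupp
  have hKK'' : K ⊆ K'' := fun x hx => subset_closure (by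
    intro h
    have : χ x = 1 := hχ1 hx
    rw [h] at this
    norm_num at this)
  obtain ⟨χ₀, hχ₀c, hχ₀cs, hχ₀supp, hχ₀1, hχ₀icc⟩ := cutoff_exists hK''cpt hO hK''O
  obtain ⟨hInt_un, hInt_u, C, hC⟩ := hbdd K'' hK''cpt hK''O
  have hK''fin : volume K'' ≠ ⊤ := hK''cpt.measure_lt_top.ne
  have hKmeas : MeasurableSet K := hK.isClosed.measurableSet
  have hK''meas : MeasurableSet K'' := hK''cpt.isClosed.measurableSet
  have hχ0 : ∀ y, 0 ≤ χ y := fun y => (hχicc y).1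
  have hχle1 : ∀ y, χ y ≤ 1 := fun y => (hχicc y).2
  have hχzero : ∀ y, y ∉ K'' → χ y = 0 := fun y hy => image_eq_zero_of_notMem_tsupport hy
  -- Step 1 : dominated convergence in k
  have hDCT : Tendsto (fun k : ℕ => ∫ y in K'', max (|u y| - k) 0) atTop
      (nhds (∫ y in K'', (0:ℝ))) := by
    apply tendsto_integral_of_dominated_convergence (fun y => |u y|)
    · intro n
      exact ((humeas.abs.sub measurable_const).max measurable_const).aestronglyMeasurable
    · exact hInt_u.abs
    · intro n
      filter_upwards with y
      rw [Real.norm_eq_abs, abs_of_nonneg (le_max_right _ _)]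
      apply max_le
      · exact (sub_le_self _ (by positivity)).trans (le_refl _)
      · exact abs_nonneg _
    · filter_upwards with y
      have hev : (fun k : ℕ => max (|u y| - k) 0) =ᶠ[atTop] fun _ => (0:ℝ) := by
        filter_upwards [eventually_ge_atTop ⌈|u y|⌉₊] with k hk
        apply max_eq_right
        have : |u y| ≤ (k:ℝ) := (Nat.le_ceil _).trans (by exact_mod_cast hk)
        linarith
      exact Tendsto.congr' hev.symm tendsto_const_nhds
  simp only [MeasureTheory.integral_zero] at hDCT
  rw [Metric.tendsto_atTop]
  intro ε hε
  have h8 : 0 < ε/8 := by linarith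
  obtain ⟨k, hk⟩ := (hDCT.eventually_lt_const h8).exists
  have hkr : (0:ℝ) ≤ (k:ℝ) := Nat.cast_nonneg k
  set kr : ℝ := (k:ℝ) with hkrdef
  set M : ℝ := kr + 1 with hMdef
  have hM1 : 1 ≤ M := by simp [hMdef]; linarith
  have hM0 : 0 < M := by linarith
  -- measurability
  have hBun_meas : ∀ n, Measurable fun y => betaK kr (un n y) :=
    fun n => (cont_betaK kr).measurable.comp (hunmeas n)
  have hBu_meas : Measurable fun y => betaK kr (u y) :=
    (cont_betaK kr).measurable.comp humeas
  have hΓun_meas : ∀ n, Measurable fun y => gammaK kr (un n y) :=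
    fun n => (cont_gammaK kr).measurable.comp (hunmeas n)
  have hΓu_meas : Measurable fun y => gammaK kr (u y) :=
    (cont_gammaK kr).measurable.comp humeas
  have hBbd : ∀ s : ℝ, |betaK kr s| ≤ M := fun s => abs_betaK_le hkr s
  have hΓ0 : ∀ s : ℝ, 0 ≤ gammaK kr s := fun s => gammaK_nonneg hkr s
  have hΓle : ∀ s : ℝ, gammaK kr s ≤ max (|s| - kr) 0 := fun s => gammaK_le hkr s
  have hΓabs : ∀ s : ℝ, gammaK kr s ≤ |s| := fun s => (hΓle s).trans (by
    apply max_le (by linarith [abs_nonneg s]) (abs_nonneg s))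
  -- integrability helper for bounded functions vanishing outside K''
  have intb : ∀ (f : EuclideanSpace ℝ (Fin d) → ℝ) (c : ℝ), Measurable f →
      (∀ y, |f y| ≤ c) → (∀ y, y ∉ K'' → f y = 0) → Integrable f volume := by
    intro f c hf hb hz
    refine (integrableOn_iff_integrable_of_support_subset ?_).mp
      (Measure.integrableOn_of_bounded hK''fin hf.aestronglyMeasurable
        (ae_of_all _ fun y => by rw [Real.norm_eq_abs]; exact hb y))
    intro y hy
    by_contra h
    exact hy (hz y h)
  have hχmul_le_one : ∀ y, |χ y| ≤ 1 := fun y => by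
    rw [abs_of_nonneg (hχ0 y)]; exact hχle1 y
  -- the three main limits from hconv
  have hβ := hconv (betaK kr) (contDiff2_betaK kr) (hcs_iteratedDeriv2_betaK hkr)
  have hβ2 := hconv (fun s => betaK kr s ^ 2) (contDiff2_betaK_sq kr)
    (hcs_iteratedDeriv2_betaK_sq hkr) χ hχc hχcs hχsupp
  have hγconv := hconv (gammaK kr) (contDiff2_gammaK kr) (hcs_iteratedDeriv2_gammaK hkr)
    χ hχc hχcs hχsupp
  -- the fixed function g = betaK(u) * χ
  set g : EuclideanSpace ℝ (Fin d) → ℝ := fun y => betaK kr (u y) * χ y with hgdef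
  have hgmeas : Measurable g := hBu_meas.mul hχc.measurable
  have hgbd : ∀ y, |g y| ≤ M := by
    intro y
    rw [hgdef, abs_mul]
    calc |betaK kr (u y)| * |χ y| ≤ M * 1 :=
          mul_le_mul (hBbd _) (hχmul_le_one y) (abs_nonneg _) (by linarith)
      _ = M := mul_one M
  have hgzero : ∀ y, y ∉ K'' → g y = 0 := fun y hy => by
    rw [hgdef]; simp [hχzero y hy]
  have hgint : Integrable g volume := intb g M hgmeas hgbd hgzero
  -- Step 2: weak-* extension to the bounded test function g
  have hS2 : Tendsto (fun n => ∫ y, betaK kr (un n y) * g y) atTop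
      (nhds (∫ y, betaK kr (u y) * g y)) := by
    rw [Metric.tendsto_atTop]
    intro ε' hε'
    have hM2 : (0:ℝ) < 2*M + 2 := by linarith
    set δ := ε' / (2*M + 2) with hδdef
    have hδ : 0 < δ := div_pos hε' hM2
    obtain ⟨ρ₀, hρ₀cs, hρ₀close, hρ₀cont, hρ₀int⟩ :=
      hgint.exists_hasCompactSupport_integral_sub_le hδ
    set ρ : EuclideanSpace ℝ (Fin d) → ℝ := fun y => ρ₀ y * χ₀ y with hρdef
    have hρcont : Continuous ρ := hρ₀cont.mul hχ₀c
    have hρcs : HasCompactSupport ρ := hχ₀cs.mul_left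
    have hρsupp : tsupport ρ ⊆ O := by
      refine subset_trans ?_ hχ₀supp
      apply closure_mono
      intro y hy
      exact fun h => hy (by rw [hρdef]; simp [h])
    have hρint : Integrable ρ volume := hρcont.integrable_of_hasCompactSupport hρcs
    have hclose : (∫ y, ‖g y - ρ y‖) ≤ δ := by
      have hle : ∀ y, ‖g y - ρ y‖ ≤ ‖g y - ρ₀ y‖ := by
        intro y
        by_cases hy : y ∈ K''
        · have : χ₀ y = 1 := hχ₀1 hy
          rw [hρdef]
          simp [this]
        · rw [hgzero y hy]
          simp only [zero_sub, norm_neg, hρdef]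
          rw [Real.norm_eq_abs, Real.norm_eq_abs, abs_mul]
          calc |ρ₀ y| * |χ₀ y| ≤ |ρ₀ y| * 1 := by
                apply mul_le_mul_of_nonneg_left _ (abs_nonneg _)
                rw [abs_of_nonneg (hχ₀icc y).1]
                exact (hχ₀icc y).2
            _ = |ρ₀ y| := mul_one _
      calc (∫ y, ‖g y - ρ y‖) ≤ ∫ y, ‖g y - ρ₀ y‖ :=
            integral_mono ((hgint.sub hρint).norm) ((hgint.sub hρ₀int).norm) hle
        _ ≤ δ := hρ₀close
    have hT := hβ ρ hρcont hρcs hρsupp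
    rw [Metric.tendsto_atTop] at hT
    obtain ⟨N, hN⟩ := hT δ hδ
    refine ⟨N, fun n hn => ?_⟩
    have key : ∀ w : EuclideanSpace ℝ (Fin d) → ℝ, Measurable w →
        |(∫ y, betaK kr (w y) * g y) - ∫ y, betaK kr (w y) * ρ y| ≤ M * δ := by
      intro w hw
      have hBw : Measurable fun y => betaK kr (w y) := (cont_betaK kr).measurable.comp hw
      have hBwbd : ∀ y, ‖betaK kr (w y)‖ ≤ M := fun y => by
        rw [Real.norm_eq_abs]; exact hBbd _
      have hint1 : Integrable (fun y => betaK kr (w y) * g y) volume :=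
        hgint.bdd_mul hBw.aestronglyMeasurable (c := M) (ae_of_all _ hBwbd)
      have hint2 : Integrable (fun y => betaK kr (w y) * ρ y) volume :=
        hρint.bdd_mul hBw.aestronglyMeasurable (c := M) (ae_of_all _ hBwbd)
      rw [← integral_sub hint1 hint2]
      calc |∫ y, (betaK kr (w y) * g y - betaK kr (w y) * ρ y)|
          ≤ ∫ y, ‖betaK kr (w y) * g y - betaK kr (w y) * ρ y‖ := by
            rw [← Real.norm_eq_abs]
            exact norm_integral_le_integral_norm _
        _ ≤ ∫ y, M * ‖g y - ρ y‖ := by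
            apply integral_mono ((hint1.sub hint2).norm) (((hgint.sub hρint).norm).const_mul M)
            intro y
            show ‖betaK kr (w y) * g y - betaK kr (w y) * ρ y‖ ≤ M * ‖g y - ρ y‖
            rw [show betaK kr (w y) * g y - betaK kr (w y) * ρ y
                = betaK kr (w y) * (g y - ρ y) by ring, norm_mul]
            exact mul_le_mul_of_nonneg_right (hBwbd y) (norm_nonneg _)
        _ = M * ∫ y, ‖g y - ρ y‖ := MeasureTheory.integral_const_mul M _
        _ ≤ M * δ := mul_le_mul_of_nonneg_left hclose (by linarith)
    have hd := hN n hn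
    rw [Real.dist_eq] at hd ⊢
    have h1 := key (un n) (hunmeas n)
    have h2 := key u humeas
    have tri : |(∫ y, betaK kr (un n y) * g y) - ∫ y, betaK kr (u y) * g y|
        ≤ |(∫ y, betaK kr (un n y) * g y) - ∫ y, betaK kr (un n y) * ρ y|
          + |(∫ y, betaK kr (un n y) * ρ y) - ∫ y, betaK kr (u y) * ρ y|
          + |(∫ y, betaK kr (u y) * ρ y) - ∫ y, betaK kr (u y) * g y| := by
      have := abs_sub_le ((∫ y, betaK kr (un n y) * g y)) (∫ y, betaK kr (un n y) * ρ y)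
        (∫ y, betaK kr (u y) * g y)
      have h2' := abs_sub_le ((∫ y, betaK kr (un n y) * ρ y)) (∫ y, betaK kr (u y) * ρ y)
        (∫ y, betaK kr (u y) * g y)
      linarith
    have habs : |(∫ y, betaK kr (u y) * ρ y) - ∫ y, betaK kr (u y) * g y| ≤ M * δ := by
      rw [abs_sub_comm]; exact h2
    have hfinal : |(∫ y, betaK kr (un n y) * g y) - ∫ y, betaK kr (u y) * g y|
        < M * δ + δ + M * δ := by linarith
    have : M * δ + δ + M * δ = (2*M+1) * δ := by ring
    rw [this] at hfinal
    calc |(∫ y, betaK kr (un n y) * g y) - ∫ y, betaK kr (u y) * g y|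
        < (2*M+1) * δ := hfinal
      _ < (2*M+2) * δ := by nlinarith
      _ = ε' := by rw [hδdef]; field_simp
  -- expansion of the square
  have hIsq : ∀ w : EuclideanSpace ℝ (Fin d) → ℝ, Measurable w →
      Integrable (fun y => betaK kr (w y)^2 * χ y) volume := by
    intro w hw
    apply intb _ (M^2)
    · exact (((cont_betaK kr).measurable.comp hw).pow_const 2).mul hχc.measurable
    · intro y
      rw [abs_mul]
      calc |betaK kr (w y)^2| * |χ y| ≤ M^2 * 1 := by
            apply mul_le_mul _ (hχmul_le_one y) (abs_nonneg _) (by positivity)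
            rw [abs_pow]
            exact pow_le_pow_left₀ (abs_nonneg _) (hBbd _) 2
        _ = M^2 := mul_one _
    · intro y hy
      rw [hχzero y hy, mul_zero]
  have hIprod : ∀ w : EuclideanSpace ℝ (Fin d) → ℝ, Measurable w →
      Integrable (fun y => betaK kr (w y) * g y) volume := by
    intro w hw
    refine hgint.bdd_mul ((cont_betaK kr).measurable.comp hw).aestronglyMeasurable (c := M) (ae_of_all _ fun y => ?_)
    rw [Real.norm_eq_abs]
    exact hBbd _
  have hexpand : ∀ n, (∫ y, (betaK kr (un n y) - betaK kr (u y))^2 * χ y)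
      = (∫ y, betaK kr (un n y)^2 * χ y) - 2*(∫ y, betaK kr (un n y) * g y)
        + (∫ y, betaK kr (u y)^2 * χ y) := by
    intro n
    have h1 := hIsq (un n) (hunmeas n)
    have h2 := (hIprod (un n) (hunmeas n)).const_mul 2
    have h3 := hIsq u humeas
    have heq : (fun y => (betaK kr (un n y) - betaK kr (u y))^2 * χ y)
        = fun y => (betaK kr (un n y)^2 * χ y - 2*(betaK kr (un n y) * g y))
            + betaK kr (u y)^2 * χ y := by
      funext y
      rw [hgdef]
      ring
    have h12 : Integrable (fun y => betaK kr (un n y)^2 * χ y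
        - 2*(betaK kr (un n y) * g y)) volume := h1.sub h2
    rw [heq, integral_add h12 h3, integral_sub h1 h2, MeasureTheory.integral_const_mul 2 _]
  have hgg : (∫ y, betaK kr (u y) * g y) = ∫ y, betaK kr (u y)^2 * χ y := by
    have : (fun y => betaK kr (u y) * g y) = fun y => betaK kr (u y)^2 * χ y := by
      funext y
      rw [hgdef]
      ring
    rw [this]
  have hAtend : Tendsto (fun n => ∫ y, (betaK kr (un n y) - betaK kr (u y))^2 * χ y)
      atTop (nhds 0) := by
    have hcomb := (hβ2.sub (hS2.const_mul 2)).add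
      (tendsto_const_nhds (x := ∫ y, betaK kr (u y)^2 * χ y) (f := atTop))
    have hlim0 : (∫ y, betaK kr (u y)^2 * χ y) - 2*(∫ y, betaK kr (u y) * g y)
        + (∫ y, betaK kr (u y)^2 * χ y) = 0 := by
      rw [hgg]; ring
    rw [hlim0] at hcomb
    exact hcomb.congr fun n => (hexpand n).symm
  -- gamma tail at the limit
  have iγuχ : IntegrableOn (fun y => gammaK kr (u y) * χ y) K'' volume := by
    apply Integrable.mono' hInt_u.abs ((hΓu_meas.mul hχc.measurable).aestronglyMeasurable)
    filter_upwards with y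
    simp only [Pi.mul_apply]
    rw [Real.norm_eq_abs, abs_mul, abs_of_nonneg (hΓ0 _)]
    calc gammaK kr (u y) * |χ y| ≤ |u y| * 1 :=
          mul_le_mul (hΓabs _) (hχmul_le_one y) (abs_nonneg _) (abs_nonneg _)
      _ = |u y| := mul_one _
  have imax : IntegrableOn (fun y => max (|u y| - kr) 0) K'' volume := by
    apply Integrable.mono' hInt_u.abs
      (((humeas.abs.sub measurable_const).max measurable_const).aestronglyMeasurable)
    filter_upwards with y
    rw [Real.norm_eq_abs, abs_of_nonneg (le_max_right _ _)]
    apply max_le _ (abs_nonneg _)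
    simp only [Pi.sub_apply]
    linarith [abs_nonneg (u y)]
  have hγulim : (∫ y, gammaK kr (u y) * χ y) < ε/8 := by
    have e1 : (∫ y, gammaK kr (u y) * χ y) = ∫ y in K'', gammaK kr (u y) * χ y :=
      (setIntegral_eq_integral_of_forall_compl_eq_zero
        (fun y hy => by rw [hχzero y hy, mul_zero])).symm
    rw [e1]
    refine lt_of_le_of_lt ?_ hk
    apply setIntegral_mono_on iγuχ imax hK''meas
    intro y _
    calc gammaK kr (u y) * χ y ≤ gammaK kr (u y) :=
          mul_le_of_le_one_right (hΓ0 _) (hχle1 y)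
      _ ≤ max (|u y| - kr) 0 := hΓle _
  have hγev : ∀ᶠ n in atTop, (∫ y, gammaK kr (un n y) * χ y) < ε/4 :=
    hγconv.eventually_lt_const (by linarith)
  -- choice of delta for the quadratic trick
  set V := (volume K).toReal with hVdef
  have hV0 : (0:ℝ) ≤ V := ENNReal.toReal_nonneg
  set δ := ε / (8 * (V + 1)) with hδdef
  have hδ : 0 < δ := by
    apply div_pos hε
    nlinarith
  have hδV : δ * V ≤ ε/8 := by
    have h1 : δ * (V+1) = ε/8 := by
      rw [hδdef]
      field_simp
    nlinarith
  have hAev : ∀ᶠ n in atTop,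
      (∫ y, (betaK kr (un n y) - betaK kr (u y))^2 * χ y) < δ*ε/2 :=
    hAtend.eventually_lt_const (by positivity)
  obtain ⟨N, hN⟩ := eventually_atTop.mp (hAev.and hγev)
  refine ⟨N, fun n hn => ?_⟩
  obtain ⟨hA, hγn⟩ := hN n hn
  rw [Real.dist_eq, sub_zero, abs_of_nonneg (integral_nonneg fun y => abs_nonneg _)]
  -- integrability on K'' of the remaining pieces
  have iquad : IntegrableOn (fun y => (betaK kr (un n y) - betaK kr (u y))^2) K'' volume := by
    apply Measure.integrableOn_of_bounded hK''fin
      (((hBun_meas n).sub hBu_meas).pow_const 2).aestronglyMeasurable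
    filter_upwards with y
    rw [Real.norm_eq_abs, abs_pow]
    have hle : |betaK kr (un n y) - betaK kr (u y)| ≤ 2*M := by
      have : |betaK kr (un n y) - betaK kr (u y)| ≤ |betaK kr (un n y)| + |betaK kr (u y)| := by
        rw [sub_eq_add_neg]
        refine (abs_add_le _ _).trans ?_
        rw [abs_neg]
      linarith [hBbd (un n y), hBbd (u y)]
    calc |betaK kr (un n y) - betaK kr (u y)| ^ 2 ≤ (2*M) ^ 2 :=
          pow_le_pow_left₀ (abs_nonneg _) hle 2
      _ = (2*M)^2 := rfl
  have iquadχ : IntegrableOn (fun y => (betaK kr (un n y) - betaK kr (u y))^2 * χ y) K'' volume := by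
    apply Integrable.mono' iquad
      ((((hBun_meas n).sub hBu_meas).pow_const 2).mul hχc.measurable).aestronglyMeasurable
    filter_upwards with y
    simp only [Pi.mul_apply, Pi.sub_apply]
    rw [Real.norm_eq_abs, abs_mul, abs_of_nonneg (sq_nonneg _)]
    exact mul_le_of_le_one_right (sq_nonneg _) (hχmul_le_one y)
  have iγun : IntegrableOn (fun y => gammaK kr (un n y)) K'' volume := by
    apply Integrable.mono' (hInt_un n).abs (hΓun_meas n).aestronglyMeasurable
    filter_upwards with y
    rw [Real.norm_eq_abs, abs_of_nonneg (hΓ0 _)]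
    exact hΓabs _
  have iγunχ : IntegrableOn (fun y => gammaK kr (un n y) * χ y) K'' volume := by
    apply Integrable.mono' iγun ((hΓun_meas n).mul hχc.measurable).aestronglyMeasurable
    filter_upwards with y
    simp only [Pi.mul_apply]
    rw [Real.norm_eq_abs, abs_mul, abs_of_nonneg (hΓ0 _)]
    exact mul_le_of_le_one_right (hΓ0 _) (hχmul_le_one y)
  have iγu : IntegrableOn (fun y => gammaK kr (u y)) K'' volume := by
    apply Integrable.mono' hInt_u.abs hΓu_meas.aestronglyMeasurable
    filter_upwards with y
    rw [Real.norm_eq_abs, abs_of_nonneg (hΓ0 _)]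
    exact hΓabs _
  -- comparison of set integrals with the chi-weighted full integrals
  have chain : ∀ f : EuclideanSpace ℝ (Fin d) → ℝ, (∀ y, 0 ≤ f y) →
      IntegrableOn (fun y => f y * χ y) K'' volume →
      (∫ y in K, f y) ≤ ∫ y, f y * χ y := by
    intro f hf hint
    have step1 : (∫ y in K, f y) = ∫ y in K, f y * χ y := by
      apply setIntegral_congr_fun hKmeas
      intro y hy
      show f y = f y * χ y
      rw [show χ y = 1 from hχ1 hy, mul_one]
    have step2 : (∫ y in K, f y * χ y) ≤ ∫ y in K'', f y * χ y := by
      apply setIntegral_mono_set hint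
      · filter_upwards with y
        exact mul_nonneg (hf y) (hχ0 y)
      · exact hKK''.eventuallyLE
    have step3 : (∫ y in K'', f y * χ y) = ∫ y, f y * χ y :=
      setIntegral_eq_integral_of_forall_compl_eq_zero
        (fun y hy => by rw [hχzero y hy, mul_zero])
    rw [step1, ← step3]
    exact step2
  -- pointwise bound
  have hpt : ∀ y, |un n y - u y| ≤ (betaK kr (un n y) - betaK kr (u y))^2/(2*δ) + δ/2
      + gammaK kr (un n y) + gammaK kr (u y) := by
    intro y
    have e2 : |betaK kr (un n y) - betaK kr (u y)|
        ≤ (betaK kr (un n y) - betaK kr (u y))^2/(2*δ) + δ/2 := abs_le_sq_div hδ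
    have h1 := abs_sub_betaK hkr (un n y)
    have h2 := abs_sub_betaK hkr (u y)
    have t : un n y - u y = (betaK kr (un n y) - betaK kr (u y))
        + ((un n y - betaK kr (un n y)) - (u y - betaK kr (u y))) := by ring
    have tri1 : |un n y - u y| ≤ |betaK kr (un n y) - betaK kr (u y)|
        + |(un n y - betaK kr (un n y)) - (u y - betaK kr (u y))| := by
      rw [t]; exact abs_add_le _ _
    have tri2 : |(un n y - betaK kr (un n y)) - (u y - betaK kr (u y))|
        ≤ |un n y - betaK kr (un n y)| + |u y - betaK kr (u y)| := by
      rw [sub_eq_add_neg]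
      refine (abs_add_le _ _).trans ?_
      rw [abs_neg]
    linarith
  -- integrability on K of everything
  have iabs : IntegrableOn (fun y => |un n y - u y|) K volume :=
    (((hInt_un n).mono_set hKK'').sub (hInt_u.mono_set hKK'')).abs
  have i1 : IntegrableOn (fun y => (betaK kr (un n y) - betaK kr (u y))^2/(2*δ)) K volume :=
    (iquad.mono_set hKK'').div_const _
  have i2 : IntegrableOn (fun _ => δ/2) K volume :=
    integrableOn_const hK.measure_lt_top.ne
  have i3 : IntegrableOn (fun y => gammaK kr (un n y)) K volume := iγun.mono_set hKK''
  have i4 : IntegrableOn (fun y => gammaK kr (u y)) K volume := iγu.mono_set hKK''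
  have i12 : IntegrableOn (fun y => (betaK kr (un n y) - betaK kr (u y))^2/(2*δ) + δ/2)
      K volume := i1.add i2
  have i123 : IntegrableOn (fun y => (betaK kr (un n y) - betaK kr (u y))^2/(2*δ) + δ/2
      + gammaK kr (un n y)) K volume := i12.add i3
  have i1234 : IntegrableOn (fun y => (betaK kr (un n y) - betaK kr (u y))^2/(2*δ) + δ/2
      + gammaK kr (un n y) + gammaK kr (u y)) K volume := i123.add i4
  have main1 : (∫ y in K, |un n y - u y|)
      ≤ ∫ y in K, ((betaK kr (un n y) - betaK kr (u y))^2/(2*δ) + δ/2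
        + gammaK kr (un n y) + gammaK kr (u y)) :=
    setIntegral_mono_on iabs i1234 hKmeas fun y _ => hpt y
  have split : (∫ y in K, ((betaK kr (un n y) - betaK kr (u y))^2/(2*δ) + δ/2
        + gammaK kr (un n y) + gammaK kr (u y)))
      = (∫ y in K, (betaK kr (un n y) - betaK kr (u y))^2/(2*δ)) + (∫ y in K, δ/2)
        + (∫ y in K, gammaK kr (un n y)) + (∫ y in K, gammaK kr (u y)) := by
    rw [integral_add i123 i4, integral_add i12 i3, integral_add i1 i2]
  -- bounds on the four pieces
  have b1 : (∫ y in K, (betaK kr (un n y) - betaK kr (u y))^2/(2*δ)) < ε/4 := by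
    have hq : (∫ y in K, (betaK kr (un n y) - betaK kr (u y))^2) < δ*ε/2 :=
      lt_of_le_of_lt (chain _ (fun y => sq_nonneg _) iquadχ) hA
    rw [MeasureTheory.integral_div]
    have heq : (δ*ε/2)/(2*δ) = ε/4 := by
      field_simp
      ring
    rw [← heq]
    exact div_lt_div_of_pos_right hq (by positivity)
  have b2 : (∫ y in K, δ/2) ≤ ε/16 := by
    rw [setIntegral_const, smul_eq_mul, measureReal_def, ← hVdef]
    nlinarith
  have b3 : (∫ y in K, gammaK kr (un n y)) < ε/4 :=
    lt_of_le_of_lt (chain _ (fun y => hΓ0 _) iγunχ) hγn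
  have b4 : (∫ y in K, gammaK kr (u y)) < ε/8 := by
    have step : (∫ y in K, gammaK kr (u y)) ≤ ∫ y in K, max (|u y| - kr) 0 :=
      setIntegral_mono_on i4 (imax.mono_set hKK'') hKmeas fun y _ => hΓle _
    have step2 : (∫ y in K, max (|u y| - kr) 0) ≤ ∫ y in K'', max (|u y| - kr) 0 := by
      apply setIntegral_mono_set imax
      · filter_upwards with y
        exact le_max_right _ _
      · exact hKK''.eventuallyLE
    linarith
  linarith
end
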